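/- arXiv:2601.14725 — 3 statements merged into one kernel-verified Lean document; each statement's English description precedes it below -/
import Mathlib

section
/- Let η ∈ ℝ^r have i.i.d. standard Laplace entries and let a ∈ ℝ^r with ‖a‖₁ > ε ≥ 0. Then there exists a measurable set M ⊆ ℝ^r with ℙ(a + η ∈ M) > e^ε · ℙ(η ∈ M). In other words, the shifted Laplace mechanism with ℓ¹-sensitivity exceeding ε is not (ε,0)-differentially private. -/
open MeasureTheory

/-- The law of an `r`-dimensional vector of i.i.d. standard Laplace entries:
joint density `2^{-r} e^{−‖η‖₁}` with respect to Lebesgue measure on `ℝ^r`. -/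
noncomputable def iidLaplace (r : ℕ) : Measure (Fin r → ℝ) :=
  volume.withDensity fun η =>
    ENNReal.ofReal ((2 : ℝ) ^ (-(r : ℝ)) * Real.exp (-∑ i, |η i|))

/-- If `‖a‖₁ > ε ≥ 0` then the shifted Laplace mechanism is not `(ε,0)`-differentially
private: there is a measurable set `M` with `ℙ(a + η ∈ M) > e^ε ℙ(η ∈ M)`. -/
theorem laplace_not_dp {r : ℕ} (a : Fin r → ℝ) (ε : ℝ) (hε : 0 ≤ ε)
    (ha : ε < ∑ i, |a i|) :
    ∃ M : Set (Fin r → ℝ), MeasurableSet M ∧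
      ENNReal.ofReal (Real.exp ε) * iidLaplace r {η | η ∈ M} <
        iidLaplace r {η | a + η ∈ M} := by
  classical
  set A := ∑ i, |a i| with hA
  set c : Fin r → ℝ := fun i => if 0 ≤ a i then a i else a i - 1 with hc
  set M : Set (Fin r → ℝ) := Set.pi Set.univ (fun i => Set.Icc (c i) (c i + 1)) with hM
  have hMmeas : MeasurableSet M := MeasurableSet.univ_pi fun i => measurableSet_Icc
  set f : (Fin r → ℝ) → ENNReal :=
    fun η => ENNReal.ofReal ((2 : ℝ) ^ (-(r : ℝ)) * Real.exp (-∑ i, |η i|)) with hf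
  have key1 : ∀ x ∈ M, ∀ i, |x i - a i| = |x i| - |a i| := by
    intro x hx i
    have hxi := hx i (Set.mem_univ i)
    by_cases h : 0 ≤ a i
    · simp only [hc, if_pos h, Set.mem_Icc] at hxi
      rw [abs_of_nonneg h, abs_of_nonneg (le_trans h hxi.1),
        abs_of_nonneg (by linarith [hxi.1])]
    · push_neg at h
      simp only [hc, if_neg (not_le.2 h), Set.mem_Icc] at hxi
      rw [abs_of_neg h, abs_of_neg (by linarith [hxi.2] : x i < 0),
        abs_of_nonpos (by linarith [hxi.2])]
      ring
  have key2 : ∀ x ∈ M, ∀ i, |x i| ≤ |a i| + 2 := by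
    intro x hx i
    have hxi := hx i (Set.mem_univ i)
    by_cases h : 0 ≤ a i
    · simp only [hc, if_pos h, Set.mem_Icc] at hxi
      rw [abs_le, abs_of_nonneg h]; constructor <;> linarith [hxi.1, hxi.2]
    · push_neg at h
      simp only [hc, if_neg (not_le.2 h), Set.mem_Icc] at hxi
      rw [abs_le, abs_of_neg h]; constructor <;> linarith [hxi.1, hxi.2]
  have hSmeas : MeasurableSet {η | a + η ∈ M} := hMmeas.preimage (measurable_id.const_add a)
  have e1 : iidLaplace r {η | η ∈ M} = ∫⁻ x in M, f x := by
    have : {η | η ∈ M} = M := rfl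
    rw [this, iidLaplace, withDensity_apply _ hMmeas]
  have e2 : iidLaplace r {η | a + η ∈ M} = ∫⁻ x in M, f (x - a) := by
    rw [iidLaplace, withDensity_apply _ hSmeas]
    have hcong : ∀ x, Set.indicator {η | a + η ∈ M} f x
        = Set.indicator M (fun y => f (y - a)) (a + x) := by
      intro x
      by_cases h : a + x ∈ M
      · simp [Set.indicator_apply, h, add_sub_cancel_left]
      · simp [Set.indicator_apply, h]
    calc ∫⁻ x in {η | a + η ∈ M}, f x
        = ∫⁻ x, Set.indicator {η | a + η ∈ M} f x := (lintegral_indicator hSmeas f).symm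
      _ = ∫⁻ x, Set.indicator M (fun y => f (y - a)) (a + x) := lintegral_congr hcong
      _ = ∫⁻ x, Set.indicator M (fun y => f (y - a)) x :=
          lintegral_add_left_eq_self (Set.indicator M (fun y => f (y - a))) a
      _ = ∫⁻ x in M, f (x - a) := by rw [lintegral_indicator hMmeas]
  have e3 : ∀ x ∈ M, f (x - a) = ENNReal.ofReal (Real.exp A) * f x := by
    intro x hx
    have hsum : ∑ i, |(x - a) i| = (∑ i, |x i|) - A := by
      rw [hA, ← Finset.sum_sub_distrib]
      exact Finset.sum_congr rfl fun i _ => key1 x hx i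
    simp only [hf]
    rw [hsum, ← ENNReal.ofReal_mul (Real.exp_nonneg A)]
    congr 1
    have : Real.exp (-((∑ i, |x i|) - A)) = Real.exp A * Real.exp (-∑ i, |x i|) := by
      rw [← Real.exp_add]; ring_nf
    rw [this]; ring
  have e4 : ∫⁻ x in M, f (x - a) = ENNReal.ofReal (Real.exp A) * ∫⁻ x in M, f x := by
    rw [setLIntegral_congr_fun hMmeas e3]
    exact lintegral_const_mul' _ _ ENNReal.ofReal_ne_top
  have hvol : volume M = 1 := by
    rw [hM, volume_pi_pi]
    simp [Real.volume_Icc]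
  set I := ∫⁻ x in M, f x with hI
  have hIpos : 0 < I := by
    set B := ∑ i, (|a i| + 2) with hB
    have hlow : ∀ x ∈ M, ENNReal.ofReal ((2 : ℝ) ^ (-(r : ℝ)) * Real.exp (-B)) ≤ f x := by
      intro x hx
      apply ENNReal.ofReal_le_ofReal
      have hS : ∑ i, |x i| ≤ B := Finset.sum_le_sum fun i _ => key2 x hx i
      have : Real.exp (-B) ≤ Real.exp (-∑ i, |x i|) := Real.exp_le_exp.2 (by linarith)
      exact mul_le_mul_of_nonneg_left this (by positivity)
    calc (0 : ENNReal) < ENNReal.ofReal ((2 : ℝ) ^ (-(r : ℝ)) * Real.exp (-B)) * volume M := by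
          rw [hvol, mul_one]
          exact ENNReal.ofReal_pos.2 (by positivity)
      _ = ∫⁻ _ in M, ENNReal.ofReal ((2 : ℝ) ^ (-(r : ℝ)) * Real.exp (-B)) :=
          (setLIntegral_const M _).symm
      _ ≤ I := setLIntegral_mono' hMmeas hlow
  have hItop : I ≠ ⊤ := by
    have hup : ∀ x ∈ M, f x ≤ ENNReal.ofReal ((2 : ℝ) ^ (-(r : ℝ))) := by
      intro x hx
      apply ENNReal.ofReal_le_ofReal
      have h1 : Real.exp (-∑ i, |x i|) ≤ 1 := by
        rw [Real.exp_le_one_iff]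
        simp only [neg_nonpos]
        exact Finset.sum_nonneg fun i _ => abs_nonneg _
      calc (2 : ℝ) ^ (-(r : ℝ)) * Real.exp (-∑ i, |x i|) ≤ (2 : ℝ) ^ (-(r : ℝ)) * 1 :=
            mul_le_mul_of_nonneg_left h1 (by positivity)
        _ = (2 : ℝ) ^ (-(r : ℝ)) := mul_one _
    have : I ≤ ENNReal.ofReal ((2 : ℝ) ^ (-(r : ℝ))) * volume M := by
      calc I ≤ ∫⁻ _ in M, ENNReal.ofReal ((2 : ℝ) ^ (-(r : ℝ))) := setLIntegral_mono' hMmeas hup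
        _ = ENNReal.ofReal ((2 : ℝ) ^ (-(r : ℝ))) * volume M := setLIntegral_const M _
    exact ne_top_of_le_ne_top (by simp [hvol]) this
  refine ⟨M, hMmeas, ?_⟩
  rw [e1, e2, e4]
  rw [mul_comm _ I, mul_comm _ I]
  exact ENNReal.mul_lt_mul_right hIpos.ne' hItop
    ((ENNReal.ofReal_lt_ofReal_iff (Real.exp_pos A)).2 (Real.exp_lt_exp.2 ha))
end

section
/- Let L be the symmetric Laplacian of a connected weighted graph with eigenvalues 0 = λ₁ < λ₂ ≤ … ≤ λ_n < 2, and set α = max{|1−λ₂|, |1−λ_n|} < 1. Define z(t) = x(t) − (1_n 1_nᵀ/n) x(0) for the dynamics x(t+1) = (I − L)x(t) − L Δ_σ η. Then z(t) = (I − L − (λ₂/n)1_n 1_nᵀ)^t z(0) − [I − (I−L)^t] Δ_σ η, and consequently ‖x(t) − 1_n x̄₀‖ ≤ α^t ‖x(0)‖ + (1+α^t)·(Σ_i σ_i² η_i²)^{1/2}, where x̄₀ = 1_nᵀ x(0)/n. -/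
open Matrix

/-- Triangle inequality for Euclidean-style square-root-of-sum-of-squares,
proved elementarily from Cauchy–Schwarz. -/
lemma consensus_sqrt_tri {n : ℕ} (a b : Fin n → ℝ) :
    Real.sqrt (∑ i, (a i - b i) ^ 2) ≤
      Real.sqrt (∑ i, a i ^ 2) + Real.sqrt (∑ i, b i ^ 2) := by
  set A := Real.sqrt (∑ i, a i ^ 2) with hA
  set B := Real.sqrt (∑ i, b i ^ 2) with hB
  have hSa : (0:ℝ) ≤ ∑ i, a i ^ 2 := Finset.sum_nonneg fun i _ => sq_nonneg _
  have hSb : (0:ℝ) ≤ ∑ i, b i ^ 2 := Finset.sum_nonneg fun i _ => sq_nonneg _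
  have hA0 : 0 ≤ A := Real.sqrt_nonneg _
  have hB0 : 0 ≤ B := Real.sqrt_nonneg _
  have hA2 : A ^ 2 = ∑ i, a i ^ 2 := Real.sq_sqrt hSa
  have hB2 : B ^ 2 = ∑ i, b i ^ 2 := Real.sq_sqrt hSb
  have hcs : (∑ i, a i * b i) ^ 2 ≤ (A * B) ^ 2 := by
    rw [mul_pow, hA2, hB2]
    exact Finset.sum_mul_sq_le_sq_mul_sq Finset.univ a b
  have habs : -(∑ i, a i * b i) ≤ A * B := by
    nlinarith [mul_nonneg hA0 hB0]
  have hexp : (∑ i, (a i - b i) ^ 2)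
      = (∑ i, a i ^ 2) - 2 * (∑ i, a i * b i) + ∑ i, b i ^ 2 := by
    rw [Finset.sum_congr rfl fun i _ => show (a i - b i) ^ 2
        = a i ^ 2 - 2 * (a i * b i) + b i ^ 2 from by ring]
    rw [Finset.sum_add_distrib, Finset.sum_sub_distrib, ← Finset.mul_sum]
  calc Real.sqrt (∑ i, (a i - b i) ^ 2) ≤ Real.sqrt ((A + B) ^ 2) := by
        apply Real.sqrt_le_sqrt
        rw [hexp]
        nlinarith
    _ = A + B := Real.sqrt_sq (by linarith)

/-- Deterministic consensus error bound: with `L` a symmetric Laplacian whose nonzero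
eigenvalues lie in `[λ₂, λ_n] ⊆ (0,2)` and `α = max{|1−λ₂|, |1−λ_n|}`, the deviation
`z(t) = x(t) − 1 x̄₀` satisfies
`z(t) = (I − L − (λ₂/n) 1 1ᵀ)^t z(0) − [I − (I−L)^t] Δ_σ η` and
`‖x(t) − 1 x̄₀‖ ≤ α^t ‖x(0)‖ + (1+α^t) (Σ σ_i² η_i²)^{1/2}`. -/
theorem consensus_error_bound
    {n : ℕ} (hn : 1 ≤ n)
    (L : Matrix (Fin n) (Fin n) ℝ) (hsymm : L.IsSymm)
    (hLone : (L *ᵥ fun _ => (1 : ℝ)) = 0)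
    (lam2 lamn : ℝ) (hlam2 : 0 < lam2) (hlamn : lamn < 2) (hle : lam2 ≤ lamn)
    (hspec : ∀ v : Fin n → ℝ, (∑ i, v i) = 0 →
      lam2 * (∑ i, v i ^ 2) ≤ v ⬝ᵥ (L *ᵥ v) ∧ v ⬝ᵥ (L *ᵥ v) ≤ lamn * (∑ i, v i ^ 2))
    (α : ℝ) (hα : α = max |1 - lam2| |1 - lamn|)
    (σ : Fin n → ℝ) (η : Fin n → ℝ)
    (x : ℕ → Fin n → ℝ)
    (hx : ∀ t, x (t + 1) = (1 - L) *ᵥ x t - L *ᵥ (Matrix.diagonal σ *ᵥ η))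
    (xbar : ℝ) (hxbar : xbar = (∑ i, x 0 i) / n)
    (z : ℕ → Fin n → ℝ) (hz : ∀ t, z t = x t - fun _ => xbar)
    (J : Matrix (Fin n) (Fin n) ℝ) (hJ : ∀ i j, J i j = 1) :
    (∀ t, z t = (1 - L - (lam2 / n) • J) ^ t *ᵥ z 0
        - (1 - (1 - L) ^ t) *ᵥ (Matrix.diagonal σ *ᵥ η)) ∧
    ∀ t, Real.sqrt (∑ i, (x t i - xbar) ^ 2) ≤
      α ^ t * Real.sqrt (∑ i, x 0 i ^ 2)
        + (1 + α ^ t) * Real.sqrt (∑ i, σ i ^ 2 * η i ^ 2) := by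
  classical
  set M : Matrix (Fin n) (Fin n) ℝ := 1 - L with hM
  set d : Fin n → ℝ := Matrix.diagonal σ *ᵥ η with hd
  set P : Matrix (Fin n) (Fin n) ℝ := M - (lam2 / n) • J with hP
  have hnpos : (0:ℝ) < n := by exact_mod_cast Nat.lt_of_lt_of_le Nat.zero_lt_one hn
  have hne : (n:ℝ) ≠ 0 := ne_of_gt hnpos
  have hα0 : 0 ≤ α := hα ▸ le_trans (abs_nonneg _) (le_max_left _ _)
  have hαt : ∀ t : ℕ, (0:ℝ) ≤ α ^ t := fun t => pow_nonneg hα0 t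
  have hsqnn : ∀ v : Fin n → ℝ, (0:ℝ) ≤ ∑ i, v i ^ 2 := fun v =>
    Finset.sum_nonneg fun i _ => sq_nonneg _
  -- row and column sums of L vanish
  have hrow : ∀ j, ∑ i, L j i = 0 := by
    intro j
    have h := congrFun hLone j
    simpa [Matrix.mulVec, dotProduct] using h
  have hcol : ∀ j, ∑ i, L i j = 0 := by
    intro j
    calc ∑ i, L i j = ∑ i, L j i := Finset.sum_congr rfl fun i _ => hsymm.apply j i
      _ = 0 := hrow j
  have hLsum : ∀ v : Fin n → ℝ, ∑ i, (L *ᵥ v) i = 0 := by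
    intro v
    have h : ∑ i, (L *ᵥ v) i = ∑ j, (∑ i, L i j) * v j := by
      simp only [Matrix.mulVec, dotProduct]
      rw [Finset.sum_comm]
      simp [Finset.sum_mul]
    rw [h]
    simp [hcol]
  have hMsum : ∀ v : Fin n → ℝ, (∑ i, v i) = 0 → ∑ i, (M *ᵥ v) i = 0 := by
    intro v hv
    rw [hM, Matrix.sub_mulVec, Matrix.one_mulVec]
    simp only [Pi.sub_apply]
    rw [Finset.sum_sub_distrib, hv, hLsum v, sub_zero]
  -- constants are fixed by M (and killed by L)
  have hLconst : ∀ c : ℝ, (L *ᵥ fun _ => c) = 0 := by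
    intro c
    have h : (fun _ : Fin n => c) = c • (fun _ : Fin n => (1:ℝ)) := by
      funext i; simp
    rw [h, Matrix.mulVec_smul, hLone, smul_zero]
  have hMconst : ∀ c : ℝ, (M *ᵥ fun _ => c) = fun _ => c := by
    intro c
    rw [hM, Matrix.sub_mulVec, hLconst, Matrix.one_mulVec, sub_zero]
  have hMtconst : ∀ (t : ℕ) (c : ℝ), (M ^ t *ᵥ fun _ => c) = fun _ => c := by
    intro t c
    induction t with
    | zero => rw [pow_zero, Matrix.one_mulVec]
    | succ t ih => rw [pow_succ', ← Matrix.mulVec_mulVec, ih, hMconst]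
  -- symmetry of M and dot-product commutation
  have hMsymm : M.IsSymm := by
    show Mᵀ = M
    rw [hM, Matrix.transpose_sub, Matrix.transpose_one, hsymm.eq]
  have hdotcomm : ∀ u w : Fin n → ℝ, u ⬝ᵥ (M *ᵥ w) = w ⬝ᵥ (M *ᵥ u) := by
    intro u w
    rw [Matrix.dotProduct_mulVec, ← Matrix.mulVec_transpose, hMsymm.eq,
      dotProduct_comm]
  have hdotself : ∀ v : Fin n → ℝ, v ⬝ᵥ v = ∑ i, v i ^ 2 := by
    intro v; simp [dotProduct, sq]
  -- Rayleigh quotient bound for M on the zero-sum subspace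
  have hαl := abs_le.mp (hα ▸ le_max_left |1 - lam2| |1 - lamn|)
  have hαr := abs_le.mp (hα ▸ le_max_right |1 - lam2| |1 - lamn|)
  have H1 : ∀ v : Fin n → ℝ, (∑ i, v i) = 0 →
      |v ⬝ᵥ (M *ᵥ v)| ≤ α * ∑ i, v i ^ 2 := by
    intro v hv
    obtain ⟨h1, h2⟩ := hspec v hv
    have hexp : v ⬝ᵥ (M *ᵥ v) = (∑ i, v i ^ 2) - v ⬝ᵥ (L *ᵥ v) := by
      rw [hM, Matrix.sub_mulVec, dotProduct_sub, Matrix.one_mulVec, hdotself]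
    rw [hexp, abs_le]
    have hS := hsqnn v
    constructor
    · nlinarith [hαr.1, hαr.2, h2]
    · nlinarith [hαl.1, hαl.2, h1]
  -- polarization
  have H2 : ∀ u w : Fin n → ℝ, (∑ i, u i) = 0 → (∑ i, w i) = 0 →
      u ⬝ᵥ (M *ᵥ w) ≤ (α / 2) * ((∑ i, u i ^ 2) + ∑ i, w i ^ 2) := by
    intro u w hu hw
    have hsum1 : (∑ i, (u + w) i) = 0 := by
      simp only [Pi.add_apply]
      rw [Finset.sum_add_distrib, hu, hw, add_zero]
    have hsum2 : (∑ i, (u - w) i) = 0 := by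
      simp only [Pi.sub_apply]
      rw [Finset.sum_sub_distrib, hu, hw, sub_zero]
    have hp := (abs_le.mp (H1 (u + w) hsum1)).2
    have hm := (abs_le.mp (H1 (u - w) hsum2)).1
    have e1 : (u + w) ⬝ᵥ (M *ᵥ (u + w)) =
        u ⬝ᵥ (M *ᵥ u) + 2 * (u ⬝ᵥ (M *ᵥ w)) + w ⬝ᵥ (M *ᵥ w) := by
      rw [Matrix.mulVec_add, add_dotProduct, dotProduct_add,
        dotProduct_add, hdotcomm w u]
      ring
    have e2 : (u - w) ⬝ᵥ (M *ᵥ (u - w)) =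
        u ⬝ᵥ (M *ᵥ u) - 2 * (u ⬝ᵥ (M *ᵥ w)) + w ⬝ᵥ (M *ᵥ w) := by
      rw [Matrix.mulVec_sub, sub_dotProduct, dotProduct_sub,
        dotProduct_sub, hdotcomm w u]
      ring
    have e3 : (∑ i, (u + w) i ^ 2) + (∑ i, (u - w) i ^ 2)
        = 2 * (∑ i, u i ^ 2) + 2 * (∑ i, w i ^ 2) := by
      rw [← Finset.sum_add_distrib, Finset.mul_sum, Finset.mul_sum,
        ← Finset.sum_add_distrib]
      refine Finset.sum_congr rfl fun i _ => ?_
      simp only [Pi.add_apply, Pi.sub_apply]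
      ring
    rw [e1] at hp
    rw [e2] at hm
    have e4 : α * ((∑ i, (u + w) i ^ 2) + (∑ i, (u - w) i ^ 2))
        = α * (2 * (∑ i, u i ^ 2) + 2 * (∑ i, w i ^ 2)) := by rw [e3]
    nlinarith [hp, hm, e4]
  -- operator norm bound on the zero-sum subspace
  have H3 : ∀ w : Fin n → ℝ, (∑ i, w i) = 0 →
      (∑ i, (M *ᵥ w) i ^ 2) ≤ α ^ 2 * ∑ i, w i ^ 2 := by
    intro w hw
    set u : Fin n → ℝ := M *ᵥ w with hu
    have husum : (∑ i, u i) = 0 := hMsum w hw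
    have hscale : ∀ t : ℝ, t * (∑ i, u i ^ 2)
        ≤ (α / 2) * (t ^ 2 * (∑ i, u i ^ 2) + ∑ i, w i ^ 2) := by
      intro t
      have hsum : (∑ i, (t • u) i) = 0 := by
        simp only [Pi.smul_apply, smul_eq_mul]
        rw [← Finset.mul_sum, husum, mul_zero]
      have h := H2 (t • u) w hsum hw
      have e5 : (t • u) ⬝ᵥ (M *ᵥ w) = t * ∑ i, u i ^ 2 := by
        rw [smul_dotProduct, ← hu, hdotself u, smul_eq_mul]
      have e6 : (∑ i, (t • u) i ^ 2) = t ^ 2 * ∑ i, u i ^ 2 := by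
        rw [Finset.mul_sum]
        refine Finset.sum_congr rfl fun i _ => ?_
        simp only [Pi.smul_apply, smul_eq_mul]
        ring
      rw [e5, e6] at h
      exact h
    have hU0 := hsqnn u
    have hW0 := hsqnn w
    rcases eq_or_lt_of_le hα0 with hz0 | hpos
    · have h := hscale 1
      rw [← hz0] at h ⊢
      nlinarith [h]
    · have h := hscale (1 / α)
      have hα' : α ≠ 0 := ne_of_gt hpos
      have h' : (1/α) * (2*α) * (∑ i, u i ^ 2)
          ≤ ((α / 2) * ((1/α) ^ 2 * (∑ i, u i ^ 2) + ∑ i, w i ^ 2)) * (2*α) := by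
        calc (1/α) * (2*α) * (∑ i, u i ^ 2)
            = ((1/α) * (∑ i, u i ^ 2)) * (2*α) := by ring
          _ ≤ _ := mul_le_mul_of_nonneg_right h (by positivity)
      have e7 : (1/α) * (2*α) = 2 := by field_simp
      have e8 : ((α / 2) * ((1/α) ^ 2 * (∑ i, u i ^ 2) + ∑ i, w i ^ 2)) * (2*α)
          = (∑ i, u i ^ 2) + α ^ 2 * ∑ i, w i ^ 2 := by
        field_simp
      rw [e7, e8] at h'
      linarith
  -- iterated bound
  have H5 : ∀ (t : ℕ) (w : Fin n → ℝ), (∑ i, w i) = 0 →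
      (∑ i, (M ^ t *ᵥ w) i = 0) ∧
      Real.sqrt (∑ i, (M ^ t *ᵥ w) i ^ 2) ≤ α ^ t * Real.sqrt (∑ i, w i ^ 2) := by
    intro t
    induction t with
    | zero =>
      intro w hw
      rw [pow_zero, Matrix.one_mulVec, pow_zero, one_mul]
      exact ⟨hw, le_refl _⟩
    | succ t ih =>
      intro w hw
      obtain ⟨ihs, ihb⟩ := ih w hw
      have hstep : M ^ (t+1) *ᵥ w = M *ᵥ (M ^ t *ᵥ w) := by
        rw [Matrix.mulVec_mulVec, ← pow_succ']
      rw [hstep]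
      refine ⟨hMsum _ ihs, ?_⟩
      have h3 := H3 (M ^ t *ᵥ w) ihs
      have hb : Real.sqrt (∑ i, (M *ᵥ (M ^ t *ᵥ w)) i ^ 2)
          ≤ α * Real.sqrt (∑ i, (M ^ t *ᵥ w) i ^ 2) := by
        have hs := Real.sqrt_le_sqrt h3
        rwa [Real.sqrt_mul (sq_nonneg α), Real.sqrt_sq hα0] at hs
      calc Real.sqrt (∑ i, (M *ᵥ (M ^ t *ᵥ w)) i ^ 2)
          ≤ α * Real.sqrt (∑ i, (M ^ t *ᵥ w) i ^ 2) := hb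
        _ ≤ α * (α ^ t * Real.sqrt (∑ i, w i ^ 2)) :=
            mul_le_mul_of_nonneg_left ihb hα0
        _ = α ^ (t+1) * Real.sqrt (∑ i, w i ^ 2) := by ring
  -- Pythagoras: subtracting the mean decreases the norm
  have hpyth : ∀ (v : Fin n → ℝ) (c : ℝ), c = (∑ i, v i) / n →
      ((∑ i, (v i - c)) = 0) ∧ (∑ i, (v i - c) ^ 2) ≤ ∑ i, v i ^ 2 := by
    intro v c hc
    have hsum : ∑ i, v i = n * c := by rw [hc]; field_simp
    have h1 : (∑ i, (v i - c)) = 0 := by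
      rw [Finset.sum_sub_distrib, Finset.sum_const, Finset.card_univ,
        Fintype.card_fin, nsmul_eq_mul, hsum, sub_self]
    have h2 : (∑ i, (v i - c) ^ 2) = (∑ i, v i ^ 2) - (n:ℝ) * c ^ 2 := by
      rw [Finset.sum_congr rfl fun i _ => show (v i - c) ^ 2
          = v i ^ 2 - (2*c) * v i + c ^ 2 from by ring]
      rw [Finset.sum_add_distrib, Finset.sum_sub_distrib, ← Finset.mul_sum, hsum,
        Finset.sum_const, Finset.card_univ, Fintype.card_fin, nsmul_eq_mul]
      ring
    refine ⟨h1, ?_⟩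
    rw [h2]
    nlinarith [sq_nonneg c, hnpos]
  -- zero-sum of z 0
  have hz0e : ∀ i, z 0 i = x 0 i - xbar := fun i => by rw [hz 0]; rfl
  obtain ⟨hx0sum, hx0sq⟩ := hpyth (x 0) xbar hxbar
  have hz0sum : (∑ i, z 0 i) = 0 := by
    rw [Finset.sum_congr rfl fun i _ => hz0e i]
    exact hx0sum
  -- J acts as summation
  have hJv : ∀ v : Fin n → ℝ, J *ᵥ v = fun _ => (∑ i, v i) := by
    intro v
    funext i
    simp [Matrix.mulVec, dotProduct, hJ]
  have hPM : ∀ v : Fin n → ℝ, (∑ i, v i) = 0 → P *ᵥ v = M *ᵥ v := by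
    intro v hv
    rw [hP, Matrix.sub_mulVec, Matrix.smul_mulVec, hJv]
    have h : (fun _ : Fin n => (∑ i, v i)) = (0 : Fin n → ℝ) := by
      funext i; rw [hv]; rfl
    rw [h, smul_zero, sub_zero]
  have hPt : ∀ (t : ℕ) (v : Fin n → ℝ), (∑ i, v i) = 0 →
      P ^ t *ᵥ v = M ^ t *ᵥ v := by
    intro t
    induction t with
    | zero => intro v _; rfl
    | succ t ih =>
      intro v hv
      rw [pow_succ', pow_succ', ← Matrix.mulVec_mulVec, ← Matrix.mulVec_mulVec,
        ih v hv, hPM _ (H5 t v hv).1]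
  -- the recursion for z
  have hzrec : ∀ t, z (t + 1) = M *ᵥ z t - L *ᵥ d := by
    intro t
    rw [hz (t+1), hx t]
    have h1 : M *ᵥ z t = M *ᵥ x t - fun _ => xbar := by
      rw [hz t, Matrix.mulVec_sub, hMconst xbar]
    rw [h1, sub_right_comm]
  -- Part 1
  have hLM : L = 1 - M := by rw [hM, sub_sub_cancel]
  have part1 : ∀ t, z t = P ^ t *ᵥ z 0 - (1 - M ^ t) *ᵥ d := by
    intro t
    induction t with
    | zero =>
      rw [pow_zero, pow_zero, sub_self, Matrix.one_mulVec, Matrix.zero_mulVec,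
        sub_zero]
    | succ t ih =>
      rw [hzrec t, ih, Matrix.mulVec_sub]
      have h1 : M *ᵥ (P ^ t *ᵥ z 0) = P ^ (t+1) *ᵥ z 0 := by
        rw [hPt t (z 0) hz0sum, Matrix.mulVec_mulVec, ← pow_succ',
          ← hPt (t+1) (z 0) hz0sum]
      have hmat : M * (1 - M ^ t) + L = 1 - M ^ (t+1) := by
        rw [hLM, pow_succ']
        noncomm_ring
      have h2 : M *ᵥ ((1 - M ^ t) *ᵥ d) + L *ᵥ d = (1 - M ^ (t+1)) *ᵥ d := by
        rw [Matrix.mulVec_mulVec, ← Matrix.add_mulVec, hmat]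
      rw [h1, ← h2, sub_sub]
  -- the simpler form of z t
  have hzm : ∀ t, z t = M ^ t *ᵥ z 0 - (1 - M ^ t) *ᵥ d := by
    intro t
    rw [part1 t, hPt t (z 0) hz0sum]
  -- the decomposition of d
  obtain ⟨hwsum, hwsq⟩ := hpyth d ((∑ i, d i) / n) rfl
  set c : ℝ := (∑ i, d i) / n with hc
  set w : Fin n → ℝ := fun i => d i - c with hw
  have hdw : d = w + fun _ => c := by
    funext i
    simp [hw]
  have hMtd : ∀ t, (1 - M ^ t) *ᵥ d = w - M ^ t *ᵥ w := by
    intro t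
    rw [Matrix.sub_mulVec, Matrix.one_mulVec]
    have h : M ^ t *ᵥ d = M ^ t *ᵥ w + fun _ => c := by
      conv_lhs => rw [hdw]
      rw [Matrix.mulVec_add, hMtconst]
    rw [h]
    conv_lhs => rw [hdw]
    funext i
    simp only [Pi.sub_apply, Pi.add_apply]
    ring
  -- d entrywise
  have hdi : ∀ i, d i = σ i * η i := by
    intro i
    rw [hd]
    simp [Matrix.mulVec_diagonal]
  have hdsq : (∑ i, d i ^ 2) = ∑ i, σ i ^ 2 * η i ^ 2 := by
    refine Finset.sum_congr rfl fun i _ => ?_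
    rw [hdi i]
    ring
  refine ⟨part1, ?_⟩
  -- Part 2
  intro t
  have e0 : (∑ i, (x t i - xbar) ^ 2)
      = ∑ i, ((M ^ t *ᵥ z 0) i - ((1 - M ^ t) *ᵥ d) i) ^ 2 := by
    refine Finset.sum_congr rfl fun i _ => ?_
    have h : x t i - xbar = z t i := by rw [hz t]; rfl
    rw [h, hzm t]
    rfl
  rw [e0]
  have tri := consensus_sqrt_tri (M ^ t *ᵥ z 0) ((1 - M ^ t) *ᵥ d)
  refine le_trans tri (add_le_add ?_ ?_)
  · -- first term
    have hb := (H5 t (z 0) hz0sum).2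
    have hz0x : Real.sqrt (∑ i, z 0 i ^ 2) ≤ Real.sqrt (∑ i, x 0 i ^ 2) := by
      apply Real.sqrt_le_sqrt
      rw [Finset.sum_congr rfl fun i _ => by rw [hz0e i]]
      exact hx0sq
    calc Real.sqrt (∑ i, (M ^ t *ᵥ z 0) i ^ 2)
        ≤ α ^ t * Real.sqrt (∑ i, z 0 i ^ 2) := hb
      _ ≤ α ^ t * Real.sqrt (∑ i, x 0 i ^ 2) :=
          mul_le_mul_of_nonneg_left hz0x (hαt t)
  · -- second term
    have ew : (∑ i, ((1 - M ^ t) *ᵥ d) i ^ 2)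
        = ∑ i, (w i - (M ^ t *ᵥ w) i) ^ 2 := by
      rw [hMtd t]
      rfl
    rw [ew]
    have hwsum' : (∑ i, w i) = 0 := hwsum
    have tri2 := consensus_sqrt_tri w (M ^ t *ᵥ w)
    have hb2 := (H5 t w hwsum').2
    have hwd : Real.sqrt (∑ i, w i ^ 2) ≤ Real.sqrt (∑ i, σ i ^ 2 * η i ^ 2) := by
      rw [← hdsq]
      exact Real.sqrt_le_sqrt hwsq
    calc Real.sqrt (∑ i, (w i - (M ^ t *ᵥ w) i) ^ 2)
        ≤ Real.sqrt (∑ i, w i ^ 2) + Real.sqrt (∑ i, (M ^ t *ᵥ w) i ^ 2) := tri2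
      _ ≤ Real.sqrt (∑ i, w i ^ 2) + α ^ t * Real.sqrt (∑ i, w i ^ 2) :=
          add_le_add le_rfl hb2
      _ = (1 + α ^ t) * Real.sqrt (∑ i, w i ^ 2) := by ring
      _ ≤ (1 + α ^ t) * Real.sqrt (∑ i, σ i ^ 2 * η i ^ 2) := by
          apply mul_le_mul_of_nonneg_left hwd
          have := hαt t
          linarith
end

section
/- Under the consensus dynamics x(t+1) = (I − L)x(t) − L Δ_σ η with η a random vector of independent zero-mean, unit-variance entries, the deviation z(t) = x(t) − 1_n x̄₀ satisfies E[z(t)] = (I − L − (λ₂/n)1_n 1_nᵀ)^t z(0) → 0 as t → ∞, and E‖z(t)‖² ≤ α^{2t}‖z(0)‖² + (1+α^t)² Σ_{i=1}^n σ_i² E[η_i²]; in particular lim sup_{t→∞} E‖z(t)‖² ≤ Σ_i σ_i² E[η_i²]. -/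
open Matrix MeasureTheory ProbabilityTheory Finset Filter

private lemma sumMulVec {n : ℕ} (M : Matrix (Fin n) (Fin n) ℝ) (v : Fin n → ℝ) :
    ∑ i, (M *ᵥ v) i = ∑ j, (∑ i, M i j) * v j := by
  simp only [Matrix.mulVec, dotProduct]
  rw [Finset.sum_comm]
  exact Finset.sum_congr rfl fun j _ => (Finset.sum_mul ..).symm

private lemma dotSymm {n : ℕ} (M : Matrix (Fin n) (Fin n) ℝ) (hM : M.IsSymm) (u v : Fin n → ℝ) :
    u ⬝ᵥ (M *ᵥ v) = v ⬝ᵥ (M *ᵥ u) := by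
  simp only [Matrix.mulVec, dotProduct, Finset.mul_sum]
  rw [Finset.sum_comm]
  refine Finset.sum_congr rfl fun j _ => Finset.sum_congr rfl fun i _ => ?_
  rw [hM.apply j i]
  ring

private lemma bilin {n : ℕ} (M : Matrix (Fin n) (Fin n) ℝ) (hM : M.IsSymm) (α : ℝ)
    (hq : ∀ v : Fin n → ℝ, ∑ i, v i = 0 → |v ⬝ᵥ (M *ᵥ v)| ≤ α * ∑ i, v i ^ 2)
    (u w : Fin n → ℝ) (hu : ∑ i, u i = 0) (hw : ∑ i, w i = 0) :
    u ⬝ᵥ (M *ᵥ w) ≤ α * ((∑ i, u i ^ 2) + ∑ i, w i ^ 2) / 2 := by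
  have hsum1 : ∑ i, (u + w) i = 0 := by
    simp [Finset.sum_add_distrib, hu, hw]
  have hsum2 : ∑ i, (u - w) i = 0 := by
    simp [Finset.sum_sub_distrib, hu, hw]
  have h1 := (abs_le.mp (hq (u + w) hsum1)).2
  have h2 := (abs_le.mp (hq (u - w) hsum2)).1
  have hsym : w ⬝ᵥ (M *ᵥ u) = u ⬝ᵥ (M *ᵥ w) := dotSymm M hM w u
  have e1 : (u + w) ⬝ᵥ (M *ᵥ (u + w))
      = u ⬝ᵥ (M *ᵥ u) + 2 * (u ⬝ᵥ (M *ᵥ w)) + w ⬝ᵥ (M *ᵥ w) := by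
    rw [Matrix.mulVec_add, dotProduct_add, add_dotProduct, add_dotProduct, hsym]; ring
  have e2 : (u - w) ⬝ᵥ (M *ᵥ (u - w))
      = u ⬝ᵥ (M *ᵥ u) - 2 * (u ⬝ᵥ (M *ᵥ w)) + w ⬝ᵥ (M *ᵥ w) := by
    rw [Matrix.mulVec_sub, dotProduct_sub, sub_dotProduct, sub_dotProduct, hsym]; ring
  have hpar : (∑ i, ((u + w) i) ^ 2) + ∑ i, ((u - w) i) ^ 2
      = 2 * (∑ i, u i ^ 2) + 2 * ∑ i, w i ^ 2 := by
    simp only [Pi.add_apply, Pi.sub_apply]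
    rw [← Finset.sum_add_distrib, Finset.mul_sum, Finset.mul_sum, ← Finset.sum_add_distrib]
    exact Finset.sum_congr rfl fun i _ => by ring
  have hmul : α * (∑ i, ((u + w) i) ^ 2) + α * ∑ i, ((u - w) i) ^ 2
      = α * (2 * (∑ i, u i ^ 2) + 2 * ∑ i, w i ^ 2) := by rw [← mul_add, hpar]
  linarith

private lemma bilin' {n : ℕ} (M : Matrix (Fin n) (Fin n) ℝ) (hM : M.IsSymm) (α : ℝ)
    (hq : ∀ v : Fin n → ℝ, ∑ i, v i = 0 → |v ⬝ᵥ (M *ᵥ v)| ≤ α * ∑ i, v i ^ 2)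
    (u w : Fin n → ℝ) (hu : ∑ i, u i = 0) (hw : ∑ i, w i = 0) (c : ℝ) (hc : 0 < c) :
    u ⬝ᵥ (M *ᵥ w) ≤ α * (c * (∑ i, u i ^ 2) + c⁻¹ * ∑ i, w i ^ 2) / 2 := by
  set s := Real.sqrt c with hs
  have hspos : 0 < s := Real.sqrt_pos.mpr hc
  have hs2 : s ^ 2 = c := Real.sq_sqrt hc.le
  have hu' : ∑ i, (s • u) i = 0 := by
    simp only [Pi.smul_apply, smul_eq_mul]
    rw [← Finset.mul_sum, hu, mul_zero]
  have hw' : ∑ i, (s⁻¹ • w) i = 0 := by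
    simp only [Pi.smul_apply, smul_eq_mul]
    rw [← Finset.mul_sum, hw, mul_zero]
  have key := bilin M hM α hq (s • u) (s⁻¹ • w) hu' hw'
  have e1 : (s • u) ⬝ᵥ (M *ᵥ (s⁻¹ • w)) = u ⬝ᵥ (M *ᵥ w) := by
    rw [Matrix.mulVec_smul, dotProduct_smul, smul_dotProduct, smul_eq_mul, smul_eq_mul,
      ← mul_assoc, inv_mul_cancel₀ hspos.ne', one_mul]
  have e2 : ∑ i, ((s • u) i) ^ 2 = c * ∑ i, u i ^ 2 := by
    simp only [Pi.smul_apply, smul_eq_mul, mul_pow]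
    rw [← Finset.mul_sum, hs2]
  have e3 : ∑ i, ((s⁻¹ • w) i) ^ 2 = c⁻¹ * ∑ i, w i ^ 2 := by
    simp only [Pi.smul_apply, smul_eq_mul, mul_pow]
    rw [← Finset.mul_sum, inv_pow, hs2]
  rw [e1, e2, e3] at key
  exact key

private lemma contractLem {n : ℕ} (M : Matrix (Fin n) (Fin n) ℝ) (hM : M.IsSymm) (α : ℝ)
    (hα0 : 0 ≤ α)
    (hsum : ∀ v : Fin n → ℝ, ∑ i, v i = 0 → ∑ i, (M *ᵥ v) i = 0)
    (hq : ∀ v : Fin n → ℝ, ∑ i, v i = 0 → |v ⬝ᵥ (M *ᵥ v)| ≤ α * ∑ i, v i ^ 2)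
    (v : Fin n → ℝ) (hv : ∑ i, v i = 0) :
    ∑ i, ((M *ᵥ v) i) ^ 2 ≤ α ^ 2 * ∑ i, v i ^ 2 := by
  set a := ∑ i, v i ^ 2 with ha
  set b := ∑ i, ((M *ᵥ v) i) ^ 2 with hb
  have ha0 : 0 ≤ a := Finset.sum_nonneg fun i _ => sq_nonneg _
  have hb0 : 0 ≤ b := Finset.sum_nonneg fun i _ => sq_nonneg _
  rcases eq_or_lt_of_le hb0 with hb' | hbpos
  · rw [← hb']
    positivity
  have hapos : 0 < a := by
    rcases eq_or_lt_of_le ha0 with h | h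
    · exfalso
      have hv0 : v = 0 := by
        funext i
        have h0 := (Finset.sum_eq_zero_iff_of_nonneg (fun i _ => sq_nonneg (v i))).mp h.symm i
          (Finset.mem_univ i)
        exact pow_eq_zero_iff (two_ne_zero) |>.mp h0
      rw [hb, hv0, Matrix.mulVec_zero] at hbpos
      simp at hbpos
    · exact h
  have hsb : 0 < Real.sqrt b := Real.sqrt_pos.mpr hbpos
  have hsa : 0 < Real.sqrt a := Real.sqrt_pos.mpr hapos
  have hb'' : Real.sqrt b * Real.sqrt b = b := Real.mul_self_sqrt hb0
  have ha'' : Real.sqrt a * Real.sqrt a = a := Real.mul_self_sqrt ha0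
  set c := Real.sqrt a / Real.sqrt b with hc
  have hcpos : 0 < c := div_pos hsa hsb
  have hMv0 : ∑ i, (M *ᵥ v) i = 0 := hsum v hv
  have key := bilin' M hM α hq (M *ᵥ v) v hMv0 hv c hcpos
  have hdot : (M *ᵥ v) ⬝ᵥ (M *ᵥ v) = b := by
    rw [hb]; simp [dotProduct, sq]
  rw [hdot] at key
  have h1 : c * b = Real.sqrt a * Real.sqrt b := by
    rw [hc]
    field_simp
    nlinarith [hb'']
  have h2 : c⁻¹ * a = Real.sqrt a * Real.sqrt b := by
    rw [hc, inv_div]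
    field_simp
    nlinarith [ha'']
  rw [h1, h2] at key
  have key2 : b ≤ α * (Real.sqrt a * Real.sqrt b) := by linarith
  have hsqb : Real.sqrt b ≤ α * Real.sqrt a := by
    have h3 : Real.sqrt b * Real.sqrt b ≤ (α * Real.sqrt a) * Real.sqrt b := by
      rw [hb'']; nlinarith [key2]
    exact le_of_mul_le_mul_right h3 hsb
  have h4 : Real.sqrt b * Real.sqrt b ≤ (α * Real.sqrt a) * (α * Real.sqrt a) :=
    mul_self_le_mul_self (Real.sqrt_nonneg b) hsqb
  nlinarith [h4, hb'', ha'']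

private lemma contractPow {n : ℕ} (M : Matrix (Fin n) (Fin n) ℝ) (hM : M.IsSymm) (α : ℝ)
    (hα0 : 0 ≤ α)
    (hsum : ∀ v : Fin n → ℝ, ∑ i, v i = 0 → ∑ i, (M *ᵥ v) i = 0)
    (hq : ∀ v : Fin n → ℝ, ∑ i, v i = 0 → |v ⬝ᵥ (M *ᵥ v)| ≤ α * ∑ i, v i ^ 2) :
    ∀ (t : ℕ) (v : Fin n → ℝ), ∑ i, v i = 0 →
      (∑ i, ((M ^ t *ᵥ v) i) ^ 2 ≤ α ^ (2 * t) * ∑ i, v i ^ 2) ∧ ∑ i, (M ^ t *ᵥ v) i = 0 := by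
  intro t
  induction t with
  | zero => intro v hv; simp [Matrix.one_mulVec, hv]
  | succ t ih =>
      intro v hv
      obtain ⟨ih1, ih2⟩ := ih v hv
      rw [pow_succ', ← Matrix.mulVec_mulVec]
      refine ⟨?_, hsum _ ih2⟩
      calc ∑ i, ((M *ᵥ (M ^ t *ᵥ v)) i) ^ 2 ≤ α ^ 2 * ∑ i, ((M ^ t *ᵥ v) i) ^ 2 :=
            contractLem M hM α hα0 hsum hq _ ih2
        _ ≤ α ^ 2 * (α ^ (2 * t) * ∑ i, v i ^ 2) :=
            mul_le_mul_of_nonneg_left ih1 (sq_nonneg α)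
        _ = α ^ (2 * (t + 1)) * ∑ i, v i ^ 2 := by ring

set_option maxHeartbeats 1000000 in
/-- Stochastic consensus: with independent zero-mean noises `η_i`, the deviation
`z(t) = x(t) − 1 x̄₀` satisfies `E[z(t)] = (I − L − (λ₂/n) 1 1ᵀ)^t z(0) → 0` and
`E‖z(t)‖² ≤ α^{2t}‖z(0)‖² + (1+α^t)² Σ σ_i² E[η_i²]`, hence
`limsup_t E‖z(t)‖² ≤ Σ σ_i² E[η_i²]`. -/
theorem consensus_mean_and_mse
    {n : ℕ} (hn : 1 ≤ n) {Ω : Type*} [MeasurableSpace Ω]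
    (μ : Measure Ω) [IsProbabilityMeasure μ]
    (L : Matrix (Fin n) (Fin n) ℝ) (hsymm : L.IsSymm)
    (hLone : (L *ᵥ fun _ => (1 : ℝ)) = 0)
    (lam2 lamn : ℝ) (hlam2 : 0 < lam2) (hlamn : lamn < 2) (hle : lam2 ≤ lamn)
    (hspec : ∀ v : Fin n → ℝ, (∑ i, v i) = 0 →
      lam2 * (∑ i, v i ^ 2) ≤ v ⬝ᵥ (L *ᵥ v) ∧ v ⬝ᵥ (L *ᵥ v) ≤ lamn * (∑ i, v i ^ 2))
    (α : ℝ) (hα : α = max |1 - lam2| |1 - lamn|)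
    (σv : Fin n → ℝ) (η : Ω → Fin n → ℝ)
    (hmeas : ∀ i, Measurable fun ω => η ω i)
    (hindep : iIndepFun (fun i ω => η ω i) μ)
    (hmean : ∀ i, ∫ ω, η ω i ∂μ = 0)
    (hL2 : ∀ i, Integrable (fun ω => (η ω i) ^ 2) μ)
    (x0 : Fin n → ℝ) (x : ℕ → Ω → Fin n → ℝ)
    (hx0 : ∀ ω, x 0 ω = x0)
    (hx : ∀ t ω, x (t + 1) ω = (1 - L) *ᵥ x t ω - L *ᵥ (Matrix.diagonal σv *ᵥ η ω))
    (xbar : ℝ) (hxbar : xbar = (∑ i, x0 i) / n)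
    (z : ℕ → Ω → Fin n → ℝ) (hz : ∀ t ω, z t ω = x t ω - fun _ => xbar)
    (z0 : Fin n → ℝ) (hz0 : z0 = x0 - fun _ => xbar)
    (J : Matrix (Fin n) (Fin n) ℝ) (hJ : ∀ i j, J i j = 1) :
    (∀ t i, ∫ ω, z t ω i ∂μ = ((1 - L - (lam2 / n) • J) ^ t *ᵥ z0) i) ∧
    Filter.Tendsto (fun t => (1 - L - (lam2 / n) • J) ^ t *ᵥ z0)
      Filter.atTop (nhds 0) ∧
    (∀ t, ∫ ω, ∑ i, (z t ω i) ^ 2 ∂μ ≤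
      α ^ (2 * t) * (∑ i, z0 i ^ 2)
        + (1 + α ^ t) ^ 2 * ∑ i, σv i ^ 2 * ∫ ω, (η ω i) ^ 2 ∂μ) ∧
    Filter.limsup (fun t => ∫ ω, ∑ i, (z t ω i) ^ 2 ∂μ) Filter.atTop ≤
      ∑ i, σv i ^ 2 * ∫ ω, (η ω i) ^ 2 ∂μ := by
  have hn' : (0 : ℝ) < n := by
    have : (1 : ℝ) ≤ n := by exact_mod_cast hn
    linarith
  set M : Matrix (Fin n) (Fin n) ℝ := 1 - L with hM
  have hMsymm : M.IsSymm := Matrix.isSymm_one.sub hsymm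
  have hLrow : ∀ j, ∑ i, L j i = 0 := by
    intro j
    have h := congrFun hLone j
    simpa [Matrix.mulVec, dotProduct] using h
  have hLcol : ∀ j, ∑ i, L i j = 0 := by
    intro j
    rw [← hLrow j]
    exact Finset.sum_congr rfl fun i _ => hsymm.apply j i
  have hLsum : ∀ v : Fin n → ℝ, ∑ i, (L *ᵥ v) i = 0 := by
    intro v
    rw [sumMulVec]
    simp [hLcol]
  have hMv : ∀ v : Fin n → ℝ, M *ᵥ v = v - L *ᵥ v := by
    intro v
    rw [hM, Matrix.sub_mulVec, Matrix.one_mulVec]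
  have hMsum : ∀ v : Fin n → ℝ, ∑ i, v i = 0 → ∑ i, (M *ᵥ v) i = 0 := by
    intro v hv
    rw [hMv]
    simp [Finset.sum_sub_distrib, hv, hLsum]
  have hα0 : 0 ≤ α := hα ▸ le_trans (abs_nonneg _) (le_max_left _ _)
  have hα1 : α < 1 := by
    rw [hα]
    apply max_lt <;> rw [abs_lt] <;> constructor <;> linarith
  have hq : ∀ v : Fin n → ℝ, ∑ i, v i = 0 → |v ⬝ᵥ (M *ᵥ v)| ≤ α * ∑ i, v i ^ 2 := by
    intro v hv
    obtain ⟨h1, h2⟩ := hspec v hv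
    have hS : 0 ≤ ∑ i, v i ^ 2 := Finset.sum_nonneg fun i _ => sq_nonneg _
    have hdotself : v ⬝ᵥ v = ∑ i, v i ^ 2 := by simp [dotProduct, sq]
    have e : v ⬝ᵥ (M *ᵥ v) = (∑ i, v i ^ 2) - v ⬝ᵥ (L *ᵥ v) := by
      rw [hMv, dotProduct_sub, hdotself]
    have ha2 : |1 - lam2| ≤ α := hα ▸ le_max_left _ _
    have han : |1 - lamn| ≤ α := hα ▸ le_max_right _ _
    obtain ⟨ha2l, ha2r⟩ := abs_le.mp ha2
    obtain ⟨hanl, hanr⟩ := abs_le.mp han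
    rw [e, abs_le]
    constructor
    · nlinarith
    · nlinarith
  have hcontr := contractPow M hMsymm α hα0 hMsum hq
  have hMone : M *ᵥ (fun _ => (1 : ℝ)) = fun _ => 1 := by
    rw [hMv, hLone, sub_zero]
  have hMtone : ∀ t, M ^ t *ᵥ (fun _ => (1 : ℝ)) = fun _ => 1 := by
    intro t
    induction t with
    | zero => simp [Matrix.one_mulVec]
    | succ t ih => rw [pow_succ', ← Matrix.mulVec_mulVec, ih, hMone]
  set w : Ω → Fin n → ℝ := fun ω i => σv i * η ω i with hwdef
  have hdiagw : ∀ ω, Matrix.diagonal σv *ᵥ η ω = w ω := by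
    intro ω
    funext i
    simp [Matrix.mulVec, Matrix.diagonal, dotProduct, hwdef]
  have hxz : ∀ t ω, x t ω = z t ω + fun _ => xbar := by
    intro t ω
    rw [hz]
    funext i
    simp
  have hLxbar : L *ᵥ (fun _ => xbar) = 0 := by
    have h : (fun _ : Fin n => xbar) = xbar • (fun _ => (1 : ℝ)) := by
      funext i; simp
    rw [h, Matrix.mulVec_smul, hLone, smul_zero]
  have hrec : ∀ t ω, z (t + 1) ω = M *ᵥ z t ω - L *ᵥ w ω := by
    intro t ω
    rw [hz, hx, hdiagw, hxz t ω, Matrix.sub_mulVec, Matrix.one_mulVec, Matrix.mulVec_add,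
      hLxbar, hMv]
    abel
  have hz00 : ∀ ω, z 0 ω = z0 := by
    intro ω
    rw [hz, hx0, hz0]
  have hsol : ∀ t ω, z t ω = M ^ t *ᵥ z0 - (1 - M ^ t) *ᵥ w ω := by
    intro t
    induction t with
    | zero =>
        intro ω
        simp [hz00, Matrix.one_mulVec, Matrix.zero_mulVec]
    | succ t ih =>
        intro ω
        rw [hrec, ih ω, Matrix.mulVec_sub, Matrix.mulVec_mulVec, ← pow_succ']
        have hLM : L = 1 - M := by rw [hM, sub_sub_cancel]
        rw [hLM, Matrix.mulVec_mulVec]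
        have hkey : M * (1 - M ^ t) + (1 - M) = 1 - M ^ (t + 1) := by
          rw [mul_sub, mul_one, ← pow_succ']
          abel
        rw [← hkey, Matrix.add_mulVec]
        abel
  have hz0sum : ∑ i, z0 i = 0 := by
    rw [hz0]
    simp only [Pi.sub_apply, Finset.sum_sub_distrib, Finset.sum_const, Finset.card_univ,
      Fintype.card_fin, nsmul_eq_mul]
    rw [hxbar]
    field_simp
    ring
  have hsz : ∀ t, ∑ i, (M ^ t *ᵥ z0) i = 0 := fun t => (hcontr t z0 hz0sum).2
  have hJv : ∀ v : Fin n → ℝ, ∑ i, v i = 0 → J *ᵥ v = 0 := by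
    intro v hv
    funext i
    simp [Matrix.mulVec, dotProduct, hJ, hv]
  have hA : 1 - L - (lam2 / n) • J = M - (lam2 / n) • J := by rw [hM]
  have hpow : ∀ t, (1 - L - (lam2 / n) • J) ^ t *ᵥ z0 = M ^ t *ᵥ z0 := by
    intro t
    induction t with
    | zero => simp
    | succ t ih =>
        rw [pow_succ', ← Matrix.mulVec_mulVec, ih, pow_succ' M, ← Matrix.mulVec_mulVec, hA,
          Matrix.sub_mulVec, Matrix.smul_mulVec, hJv _ (hsz t), smul_zero, sub_zero]
  have hηmem : ∀ i, MemLp (fun ω => η ω i) 2 μ := fun i =>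
    (memLp_two_iff_integrable_sq (hmeas i).aestronglyMeasurable).mpr (hL2 i)
  have hηint : ∀ i, Integrable (fun ω => η ω i) μ := fun i =>
    (hηmem i).integrable (by norm_num)
  -- Part 1: the mean
  have part1 : ∀ t i, ∫ ω, z t ω i ∂μ = ((1 - L - (lam2 / n) • J) ^ t *ᵥ z0) i := by
    intro t i
    rw [hpow]
    have hrepr : (fun ω => z t ω i)
        = fun ω => (M ^ t *ᵥ z0) i - ∑ j, ((1 - M ^ t) i j * σv j) * η ω j := by
      funext ω
      rw [hsol t ω]
      simp only [Pi.sub_apply]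
      congr 1
      simp only [Matrix.mulVec, dotProduct, hwdef]
      exact Finset.sum_congr rfl fun j _ => by ring
    rw [hrepr, integral_sub (integrable_const _)
      (integrable_finset_sum _ fun j _ => (hηint j).const_mul _),
      integral_const, integral_finset_sum _ fun j _ => (hηint j).const_mul _]
    simp [integral_const_mul, hmean, measure_univ]
  -- Part 2: convergence of the mean
  have part2 : Filter.Tendsto (fun t => (1 - L - (lam2 / n) • J) ^ t *ᵥ z0)
      Filter.atTop (nhds 0) := by
    simp only [hpow]
    rw [tendsto_pi_nhds]
    intro i
    have htend : Filter.Tendsto (fun t : ℕ => α ^ t * Real.sqrt (∑ i, z0 i ^ 2))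
        Filter.atTop (nhds 0) := by
      have h := (tendsto_pow_atTop_nhds_zero_of_lt_one hα0 hα1).mul_const
        (Real.sqrt (∑ i, z0 i ^ 2))
      rwa [zero_mul] at h
    have hbound : ∀ t, ‖(M ^ t *ᵥ z0) i‖ ≤ α ^ t * Real.sqrt (∑ i, z0 i ^ 2) := by
      intro t
      have h1 := (hcontr t z0 hz0sum).1
      have h2 : ((M ^ t *ᵥ z0) i) ^ 2 ≤ α ^ (2 * t) * ∑ i, z0 i ^ 2 :=
        le_trans (Finset.single_le_sum (fun j _ => sq_nonneg ((M ^ t *ᵥ z0) j))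
          (Finset.mem_univ i)) h1
      rw [Real.norm_eq_abs, ← Real.sqrt_sq_eq_abs]
      calc Real.sqrt (((M ^ t *ᵥ z0) i) ^ 2)
          ≤ Real.sqrt (α ^ (2 * t) * ∑ i, z0 i ^ 2) := Real.sqrt_le_sqrt h2
        _ = α ^ t * Real.sqrt (∑ i, z0 i ^ 2) := by
            rw [show α ^ (2 * t) = (α ^ t) ^ 2 by rw [← pow_mul, mul_comm],
              Real.sqrt_mul (sq_nonneg _), Real.sqrt_sq (pow_nonneg hα0 t)]
    have := squeeze_zero_norm hbound htend
    simpa using this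
  -- deterministic bound for the noise part
  have hPbound : ∀ (t : ℕ) (v : Fin n → ℝ),
      ∑ i, (((1 - M ^ t) *ᵥ v) i) ^ 2 ≤ (1 + α ^ t) ^ 2 * ∑ i, v i ^ 2 := by
    intro t v
    set m := (∑ i, v i) / n with hm
    set p : Fin n → ℝ := fun i => v i - m with hp
    have hsv : ∑ i, v i = n * m := by
      rw [hm]; field_simp
    have hpsum : ∑ i, p i = 0 := by
      simp only [hp, Finset.sum_sub_distrib, Finset.sum_const, Finset.card_univ,
        Fintype.card_fin, nsmul_eq_mul]
      rw [hsv]; exact sub_self _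
    have hvp : v = p + fun _ => m := by
      funext i; simp [hp]
    have hCm : (1 - M ^ t) *ᵥ (fun _ => m) = 0 := by
      have h1 : (fun _ : Fin n => m) = m • (fun _ => (1 : ℝ)) := by funext i; simp
      rw [Matrix.sub_mulVec, Matrix.one_mulVec, h1, Matrix.mulVec_smul, hMtone, ← h1, sub_self]
    have hCv : (1 - M ^ t) *ᵥ v = p - M ^ t *ᵥ p := by
      conv_lhs => rw [hvp]
      rw [Matrix.mulVec_add, hCm, add_zero, Matrix.sub_mulVec, Matrix.one_mulVec]
    set q : Fin n → ℝ := M ^ t *ᵥ p with hqdef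
    set Sp := ∑ i, p i ^ 2 with hSp
    set Sq := ∑ i, q i ^ 2 with hSq
    have hSp0 : 0 ≤ Sp := Finset.sum_nonneg fun i _ => sq_nonneg _
    have hq2 : Sq ≤ α ^ (2 * t) * Sp := (hcontr t p hpsum).1
    have hpv : Sp ≤ ∑ i, v i ^ 2 := by
      have hexp : Sp = (∑ i, v i ^ 2) - 2 * m * (∑ i, v i) + n * m ^ 2 := by
        rw [hSp]
        have h : ∀ i : Fin n, p i ^ 2 = v i ^ 2 - 2 * m * v i + m ^ 2 := fun i => by
          simp only [hp]; ring
        rw [Finset.sum_congr rfl fun i _ => h i]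
        simp only [Finset.sum_add_distrib, Finset.sum_sub_distrib, ← Finset.mul_sum,
          Finset.sum_const, Finset.card_univ, Fintype.card_fin, nsmul_eq_mul]
      have h2 : 2 * m * (∑ i, v i) = 2 * (n * m ^ 2) := by rw [hsv]; ring
      have h3 : 0 ≤ (n : ℝ) * m ^ 2 := mul_nonneg hn'.le (sq_nonneg m)
      linarith
    have hat : α ^ (2 * t) = (α ^ t) ^ 2 := by rw [← pow_mul, mul_comm]
    have hsqq : Real.sqrt Sq ≤ α ^ t * Real.sqrt Sp := by
      calc Real.sqrt Sq ≤ Real.sqrt (α ^ (2 * t) * Sp) := Real.sqrt_le_sqrt hq2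
        _ = α ^ t * Real.sqrt Sp := by
            rw [hat, Real.sqrt_mul (sq_nonneg _), Real.sqrt_sq (pow_nonneg hα0 t)]
    have hcs := Real.sum_mul_le_sqrt_mul_sqrt Finset.univ p (fun i => -(q i))
    have hcs' : -(∑ i, p i * q i) ≤ Real.sqrt Sp * Real.sqrt Sq := by
      have e1 : ∑ i, p i * (-(q i)) = -(∑ i, p i * q i) := by
        rw [← Finset.sum_neg_distrib]
        exact Finset.sum_congr rfl fun i _ => by ring
      have e2 : ∑ i, (-(q i)) ^ 2 = Sq := by
        rw [hSq]; exact Finset.sum_congr rfl fun i _ => by ring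
      rw [e1, e2] at hcs
      exact hcs
    have hX : -(∑ i, p i * q i) ≤ α ^ t * Sp := by
      have h1 : Real.sqrt Sp * Real.sqrt Sq ≤ Real.sqrt Sp * (α ^ t * Real.sqrt Sp) :=
        mul_le_mul_of_nonneg_left hsqq (Real.sqrt_nonneg _)
      have h2 : Real.sqrt Sp * (α ^ t * Real.sqrt Sp) = α ^ t * Sp := by
        rw [show Real.sqrt Sp * (α ^ t * Real.sqrt Sp)
          = α ^ t * (Real.sqrt Sp * Real.sqrt Sp) by ring, Real.mul_self_sqrt hSp0]
      linarith
    have hexp2 : ∑ i, (((1 - M ^ t) *ᵥ v) i) ^ 2 = Sp - 2 * (∑ i, p i * q i) + Sq := by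
      calc ∑ i, (((1 - M ^ t) *ᵥ v) i) ^ 2
          = ∑ i, (p i ^ 2 - 2 * (p i * q i) + q i ^ 2) := by
            rw [hCv]
            exact Finset.sum_congr rfl fun i _ => by simp only [Pi.sub_apply]; ring
        _ = (∑ i, p i ^ 2) - 2 * (∑ i, p i * q i) + ∑ i, q i ^ 2 := by
            rw [Finset.sum_add_distrib, Finset.sum_sub_distrib, ← Finset.mul_sum]
        _ = Sp - 2 * (∑ i, p i * q i) + Sq := by rw [hSp, hSq]
    have hfin : Sp - 2 * (∑ i, p i * q i) + Sq ≤ (1 + α ^ t) ^ 2 * Sp := by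
      have hq2' : Sq ≤ (α ^ t) ^ 2 * Sp := by rw [hat] at hq2; exact hq2
      nlinarith [hq2', hX]
    calc ∑ i, (((1 - M ^ t) *ᵥ v) i) ^ 2 = Sp - 2 * (∑ i, p i * q i) + Sq := hexp2
      _ ≤ (1 + α ^ t) ^ 2 * Sp := hfin
      _ ≤ (1 + α ^ t) ^ 2 * ∑ i, v i ^ 2 :=
          mul_le_mul_of_nonneg_left hpv (sq_nonneg _)
  -- Part 3: the mean-square bound
  have part3 : ∀ t, ∫ ω, ∑ i, (z t ω i) ^ 2 ∂μ ≤
      α ^ (2 * t) * (∑ i, z0 i ^ 2)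
        + (1 + α ^ t) ^ 2 * ∑ i, σv i ^ 2 * ∫ ω, (η ω i) ^ 2 ∂μ := by
    intro t
    set a : Fin n → ℝ := M ^ t *ᵥ z0 with hadef
    set C : Matrix (Fin n) (Fin n) ℝ := 1 - M ^ t with hCdef
    have hb_eq : ∀ ω i, (C *ᵥ w ω) i = ∑ j, (C i j * σv j) * η ω j := by
      intro ω i
      simp only [Matrix.mulVec, dotProduct, hwdef]
      exact Finset.sum_congr rfl fun j _ => by ring
    have hbmem : ∀ i, MemLp (fun ω => (C *ᵥ w ω) i) 2 μ := by
      intro i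
      have h : (fun ω => (C *ᵥ w ω) i) = fun ω => ∑ j, (C i j * σv j) * η ω j :=
        funext fun ω => hb_eq ω i
      rw [h]
      exact memLp_finset_sum _ fun j _ => (hηmem j).const_mul _
    have hbint : ∀ i, Integrable (fun ω => (C *ᵥ w ω) i) μ := fun i =>
      (hbmem i).integrable (by norm_num)
    have hbsqint : ∀ i, Integrable (fun ω => ((C *ᵥ w ω) i) ^ 2) μ := fun i =>
      (memLp_two_iff_integrable_sq (hbmem i).aestronglyMeasurable).mp (hbmem i)
    have hzrepr : ∀ i, (fun ω => z t ω i) = fun ω => a i - (C *ᵥ w ω) i := by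
      intro i
      funext ω
      rw [hsol t ω]
      rfl
    have hzmem : ∀ i, MemLp (fun ω => z t ω i) 2 μ := by
      intro i
      rw [hzrepr i]
      exact (memLp_const (a i)).sub (hbmem i)
    have hzsq : ∀ i, Integrable (fun ω => (z t ω i) ^ 2) μ := fun i =>
      (memLp_two_iff_integrable_sq (hzmem i).aestronglyMeasurable).mp (hzmem i)
    have hbmean : ∀ i, ∫ ω, (C *ᵥ w ω) i ∂μ = 0 := by
      intro i
      rw [show (fun ω => (C *ᵥ w ω) i) = fun ω => ∑ j, (C i j * σv j) * η ω j from
        funext fun ω => hb_eq ω i,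
        integral_finset_sum _ fun j _ => (hηint j).const_mul _]
      simp [integral_const_mul, hmean]
    have hsplit : ∫ ω, ∑ i, (z t ω i) ^ 2 ∂μ
        = (∑ i, (a i) ^ 2) + ∑ i, ∫ ω, ((C *ᵥ w ω) i) ^ 2 ∂μ := by
      rw [integral_finset_sum _ fun i _ => hzsq i]
      have hterm : ∀ i, ∫ ω, (z t ω i) ^ 2 ∂μ = (a i) ^ 2 + ∫ ω, ((C *ᵥ w ω) i) ^ 2 ∂μ := by
        intro i
        have hzi : (fun ω => (z t ω i) ^ 2)
            = fun ω => ((a i) ^ 2 + ((C *ᵥ w ω) i) ^ 2) - (2 * a i) * (C *ᵥ w ω) i := by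
          funext ω
          have := congrFun (hzrepr i) ω
          rw [this]
          ring
        have hint2 : Integrable (fun ω => (a i) ^ 2 + ((C *ᵥ w ω) i) ^ 2) μ := by
          exact (integrable_const _).add (hbsqint i)
        have hint3 : Integrable (fun ω => (2 * a i) * (C *ᵥ w ω) i) μ := by
          exact (hbint i).const_mul _
        rw [hzi, integral_sub hint2 hint3,
          integral_add (integrable_const _) (hbsqint i), integral_const, integral_const_mul,
          hbmean i, mul_zero, sub_zero]
        simp [measure_univ]
      rw [Finset.sum_congr rfl fun i _ => hterm i, Finset.sum_add_distrib]
    rw [hsplit]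
    have hfirst : ∑ i, (a i) ^ 2 ≤ α ^ (2 * t) * ∑ i, z0 i ^ 2 := (hcontr t z0 hz0sum).1
    have hgint : ∀ i : Fin n, Integrable (fun ω => (σv i * η ω i) ^ 2) μ := by
      intro i
      have := (hL2 i).const_mul (σv i ^ 2)
      simpa [mul_pow] using this
    have hsecond : ∑ i, ∫ ω, ((C *ᵥ w ω) i) ^ 2 ∂μ
        ≤ (1 + α ^ t) ^ 2 * ∑ i, σv i ^ 2 * ∫ ω, (η ω i) ^ 2 ∂μ := by
      rw [← integral_finset_sum _ fun i _ => hbsqint i]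
      calc ∫ ω, ∑ i, ((C *ᵥ w ω) i) ^ 2 ∂μ
          ≤ ∫ ω, (1 + α ^ t) ^ 2 * ∑ i, (σv i * η ω i) ^ 2 ∂μ := by
            apply integral_mono (integrable_finset_sum _ fun i _ => hbsqint i)
              ((integrable_finset_sum _ fun i _ => hgint i).const_mul _)
            intro ω
            exact hPbound t (w ω)
        _ = (1 + α ^ t) ^ 2 * ∑ i, σv i ^ 2 * ∫ ω, (η ω i) ^ 2 ∂μ := by
            rw [integral_const_mul]
            congr 1
            rw [integral_finset_sum _ fun i _ => hgint i]
            refine Finset.sum_congr rfl fun i _ => ?_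
            rw [show (fun ω => (σv i * η ω i) ^ 2) = fun ω => σv i ^ 2 * (η ω i) ^ 2 from
              funext fun ω => by ring, integral_const_mul]
    linarith
  -- Part 4: the limsup bound
  refine ⟨part1, part2, part3, ?_⟩
  set S := ∑ i, σv i ^ 2 * ∫ ω, (η ω i) ^ 2 ∂μ with hSdef
  have hnonneg : ∀ t, 0 ≤ ∫ ω, ∑ i, (z t ω i) ^ 2 ∂μ := fun t =>
    integral_nonneg fun ω => Finset.sum_nonneg fun i _ => sq_nonneg _
  have hgt : Filter.Tendsto
      (fun t => α ^ (2 * t) * (∑ i, z0 i ^ 2) + (1 + α ^ t) ^ 2 * S)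
      Filter.atTop (nhds S) := by
    have h1 : Filter.Tendsto (fun t : ℕ => α ^ t) Filter.atTop (nhds 0) :=
      tendsto_pow_atTop_nhds_zero_of_lt_one hα0 hα1
    have h2 : Filter.Tendsto (fun t : ℕ => α ^ (2 * t)) Filter.atTop (nhds 0) := by
      simp only [pow_mul]
      exact tendsto_pow_atTop_nhds_zero_of_lt_one (sq_nonneg α) (by nlinarith)
    have h3 := (h2.mul_const (∑ i, z0 i ^ 2)).add
      ((((tendsto_const_nhds (x := (1 : ℝ))).add h1).pow 2).mul_const S)
    have he : (0 : ℝ) * (∑ i, z0 i ^ 2) + ((1 : ℝ) + 0) ^ 2 * S = S := by ring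
    rw [he] at h3
    exact h3
  have hb : Filter.IsBoundedUnder (· ≤ ·) Filter.atTop
      (fun t => α ^ (2 * t) * (∑ i, z0 i ^ 2) + (1 + α ^ t) ^ 2 * S) :=
    hgt.isBoundedUnder_le
  have hcb : Filter.IsCoboundedUnder (· ≤ ·) Filter.atTop
      (fun t => ∫ ω, ∑ i, (z t ω i) ^ 2 ∂μ) :=
    Filter.IsBoundedUnder.isCoboundedUnder_le
      ⟨0, Filter.eventually_map.mpr (Filter.Eventually.of_forall hnonneg)⟩
  calc Filter.limsup (fun t => ∫ ω, ∑ i, (z t ω i) ^ 2 ∂μ) Filter.atTop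
      ≤ Filter.limsup (fun t => α ^ (2 * t) * (∑ i, z0 i ^ 2) + (1 + α ^ t) ^ 2 * S)
        Filter.atTop := Filter.limsup_le_limsup (Filter.Eventually.of_forall part3) hcb hb
    _ = S := hgt.limsup_eq
end
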